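/- (Weber–Schafheitlin type asymptotics) Let n be a positive integer. Then as u → 1⁻, (1-u)^n · ∫_0^∞ I_0(√u·t)·K_0(t)·t^n dt tends to 2^{n-1}·(n-1)!. -/

import Mathlib

open MeasureTheory Real

/-- Modified Bessel function of the first kind, order zero. -/
noncomputable def I0 (t : ℝ) : ℝ := (1/π) * ∫ θ in (0:ℝ)..π, Real.exp (t * Real.cos θ)

/-- Modified Bessel function of the second kind, order zero. -/
noncomputable def K0 (t : ℝ) : ℝ := ∫ u in Set.Ioi (0:ℝ), Real.exp (-t * Real.cosh u)

/-- Modified Bessel function of the first kind, order one: `I₁ = I₀'`. -/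
noncomputable def I1 (t : ℝ) : ℝ := deriv I0 t

/-- Modified Bessel function of the second kind, order one: `K₁ = -K₀'`. -/
noncomputable def K1 (t : ℝ) : ℝ := -deriv K0 t

open Filter Set

lemma one_sub_cos_lb (θ : ℝ) (h1 : 0 ≤ θ) (h2 : θ ≤ π) : 2/π^2 * θ^2 ≤ 1 - Real.cos θ := by
  have hid : 1 - Real.cos θ = 2 * Real.sin (θ/2) ^ 2 := by
    have h := Real.cos_two_mul' (θ/2)
    have h2 := Real.sin_sq_add_cos_sq (θ/2)
    rw [show 2*(θ/2) = θ by ring] at h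
    nlinarith
  rw [hid]
  have hs : θ/π ≤ Real.sin (θ/2) := by
    have h := Real.mul_le_sin (x := θ/2) (by linarith) (by linarith)
    calc θ/π = 2/π * (θ/2) := by field_simp
    _ ≤ _ := h
  have hθπ : (0:ℝ) ≤ θ/π := by positivity
  have hpi := Real.pi_pos
  have : (θ/π)^2 ≤ Real.sin (θ/2)^2 := by nlinarith
  have e : 2/π^2*θ^2 = 2*(θ/π)^2 := by field_simp
  nlinarith

lemma cosh_sub_one_lb (v : ℝ) : v^2/2 ≤ Real.cosh v - 1 := by
  have hid : Real.cosh v - 1 = 2 * Real.sinh (v/2)^2 := by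
    have h := Real.cosh_two_mul (v/2)
    have h2 := Real.cosh_sq (v/2)
    rw [show 2*(v/2) = v by ring] at h
    nlinarith
  rw [hid]
  rcases le_total 0 v with hv | hv
  · have h := Real.self_le_sinh_iff.2 (by linarith : (0:ℝ) ≤ v/2)
    nlinarith
  · have h := Real.self_le_sinh_iff.2 (by linarith : (0:ℝ) ≤ -(v/2))
    rw [Real.sinh_neg] at h
    nlinarith

lemma sqrt_tendsto_atTop : Tendsto Real.sqrt atTop atTop := by
  apply tendsto_atTop_atTop.2
  intro b
  refine ⟨b^2, fun x hx => ?_⟩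
  rcases le_total b 0 with hb | hb
  · exact hb.trans (Real.sqrt_nonneg x)
  · have : b ≤ Real.sqrt (b^2) := by
      rw [Real.sqrt_sq hb]
    exact this.trans (Real.sqrt_le_sqrt hx)

lemma slope_sinh : Tendsto (fun t : ℝ => Real.sinh t / t) (nhdsWithin 0 {(0:ℝ)}ᶜ) (nhds 1) := by
  have h := Real.hasDerivAt_sinh 0
  rw [hasDerivAt_iff_tendsto_slope] at h
  simpa [slope_fun_def, Real.sinh_zero, Real.cosh_zero, div_eq_inv_mul] using h

lemma slope_sin : Tendsto (fun t : ℝ => Real.sin t / t) (nhdsWithin 0 {(0:ℝ)}ᶜ) (nhds 1) := by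
  have h := Real.hasDerivAt_sin 0
  rw [hasDerivAt_iff_tendsto_slope] at h
  simpa [slope_fun_def, Real.sin_zero, Real.cos_zero, div_eq_inv_mul] using h

lemma delta_tendsto {w : ℝ} (hw : 0 < w) :
    Tendsto (fun y : ℝ => w/(2*Real.sqrt y)) atTop (nhdsWithin 0 {(0:ℝ)}ᶜ) := by
  rw [tendsto_nhdsWithin_iff]
  constructor
  · exact Tendsto.div_atTop tendsto_const_nhds (Tendsto.const_mul_atTop two_pos sqrt_tendsto_atTop)
  · filter_upwards [eventually_gt_atTop (0:ℝ)] with y hy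
    have h1 : 0 < Real.sqrt y := Real.sqrt_pos.2 hy
    have : 0 < w/(2*Real.sqrt y) := by positivity
    exact Set.mem_compl_singleton_iff.2 (ne_of_gt this)

lemma lim_cosh {w : ℝ} (hw : 0 < w) :
    Tendsto (fun y : ℝ => y * (Real.cosh (w/Real.sqrt y) - 1)) atTop (nhds (w^2/2)) := by
  have hq : Tendsto (fun y : ℝ => Real.sinh (w/(2*Real.sqrt y)) / (w/(2*Real.sqrt y)))
      atTop (nhds 1) := slope_sinh.comp (delta_tendsto hw)
  have hcont : Tendsto (fun q : ℝ => 2*((w/2)*q)^2) (nhds 1) (nhds (2*((w/2)*1)^2)) :=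
    ((by continuity : Continuous fun q : ℝ => 2*((w/2)*q)^2).tendsto 1)
  have h := hcont.comp hq
  have hval : 2*((w/2)*1)^2 = w^2/2 := by ring
  rw [hval] at h
  apply h.congr'
  filter_upwards [eventually_gt_atTop (0:ℝ)] with y hy
  have hsy : 0 < Real.sqrt y := Real.sqrt_pos.2 hy
  have hsq : Real.sqrt y ^ 2 = y := Real.sq_sqrt hy.le
  have hδ : w/(2*Real.sqrt y) ≠ 0 := by positivity
  have hcosh : Real.cosh (w/Real.sqrt y) - 1 = 2 * Real.sinh (w/(2*Real.sqrt y))^2 := by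
    have h1 := Real.cosh_two_mul (w/(2*Real.sqrt y))
    have h2 := Real.cosh_sq (w/(2*Real.sqrt y))
    rw [show 2*(w/(2*Real.sqrt y)) = w/Real.sqrt y by field_simp] at h1
    nlinarith
  show 2*((w/2) * (Real.sinh (w/(2*Real.sqrt y)) / (w/(2*Real.sqrt y))))^2
      = y * (Real.cosh (w/Real.sqrt y) - 1)
  rw [hcosh]
  have he : (w/2) * (Real.sinh (w/(2*Real.sqrt y)) / (w/(2*Real.sqrt y)))
      = Real.sqrt y * Real.sinh (w/(2*Real.sqrt y)) := by
    field_simp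
  rw [he, mul_pow, hsq]
  ring

lemma lim_cos {w : ℝ} (hw : 0 < w) :
    Tendsto (fun y : ℝ => y * (1 - Real.cos (w/Real.sqrt y))) atTop (nhds (w^2/2)) := by
  have hq : Tendsto (fun y : ℝ => Real.sin (w/(2*Real.sqrt y)) / (w/(2*Real.sqrt y)))
      atTop (nhds 1) := slope_sin.comp (delta_tendsto hw)
  have hcont : Tendsto (fun q : ℝ => 2*((w/2)*q)^2) (nhds 1) (nhds (2*((w/2)*1)^2)) :=
    ((by continuity : Continuous fun q : ℝ => 2*((w/2)*q)^2).tendsto 1)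
  have h := hcont.comp hq
  have hval : 2*((w/2)*1)^2 = w^2/2 := by ring
  rw [hval] at h
  apply h.congr'
  filter_upwards [eventually_gt_atTop (0:ℝ)] with y hy
  have hsy : 0 < Real.sqrt y := Real.sqrt_pos.2 hy
  have hsq : Real.sqrt y ^ 2 = y := Real.sq_sqrt hy.le
  have hδ : w/(2*Real.sqrt y) ≠ 0 := by positivity
  have hcos : 1 - Real.cos (w/Real.sqrt y) = 2 * Real.sin (w/(2*Real.sqrt y))^2 := by
    have h1 := Real.cos_two_mul' (w/(2*Real.sqrt y))
    have h2 := Real.sin_sq_add_cos_sq (w/(2*Real.sqrt y))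
    rw [show 2*(w/(2*Real.sqrt y)) = w/Real.sqrt y by field_simp] at h1
    nlinarith
  show 2*((w/2) * (Real.sin (w/(2*Real.sqrt y)) / (w/(2*Real.sqrt y))))^2
      = y * (1 - Real.cos (w/Real.sqrt y))
  rw [hcos]
  have he : (w/2) * (Real.sin (w/(2*Real.sqrt y)) / (w/(2*Real.sqrt y)))
      = Real.sqrt y * Real.sin (w/(2*Real.sqrt y)) := by
    field_simp
  rw [he, mul_pow, hsq]
  ring

lemma I0_nonneg (t : ℝ) : 0 ≤ I0 t := by
  unfold I0
  have : 0 ≤ ∫ θ in (0:ℝ)..π, Real.exp (t * Real.cos θ) :=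
    intervalIntegral.integral_nonneg Real.pi_pos.le (fun x _ => (Real.exp_pos _).le)
  positivity

lemma K0_nonneg (t : ℝ) : 0 ≤ K0 t :=
  setIntegral_nonneg measurableSet_Ioi (fun x _ => (Real.exp_pos _).le)

lemma I0_measurable : Measurable I0 := by
  unfold I0
  have : ∀ t : ℝ, (∫ θ in (0:ℝ)..π, Real.exp (t * Real.cos θ))
      = ∫ θ in Set.Ioc (0:ℝ) π, Real.exp (t * Real.cos θ) := fun t =>
    intervalIntegral.integral_of_le Real.pi_pos.le
  simp_rw [this]
  apply Measurable.const_mul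
  have hsm : StronglyMeasurable (fun p : ℝ × ℝ => Real.exp (p.1 * Real.cos p.2)) :=
    (by fun_prop : Continuous fun p : ℝ × ℝ => Real.exp (p.1 * Real.cos p.2)).stronglyMeasurable
  exact hsm.integral_prod_right'.measurable

lemma K0_measurable : Measurable K0 := by
  unfold K0
  have hsm : StronglyMeasurable (fun p : ℝ × ℝ => Real.exp (-p.1 * Real.cosh p.2)) :=
    (by fun_prop : Continuous fun p : ℝ × ℝ => Real.exp (-p.1 * Real.cosh p.2)).stronglyMeasurable
  exact hsm.integral_prod_right'.measurable

lemma K0_le {y : ℝ} (hy : 0 < y) : K0 y ≤ Real.sqrt (π/(y/2))/2 * Real.exp (-y) := by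
  have hint : Integrable (fun v : ℝ => Real.exp (-y) * Real.exp (-(y/2) * v^2)) :=
    (integrable_exp_neg_mul_sq (by positivity : (0:ℝ) < y/2)).const_mul _
  have hpt : ∀ v : ℝ, Real.exp (-y * Real.cosh v) ≤ Real.exp (-y) * Real.exp (-(y/2) * v^2) := by
    intro v
    rw [← Real.exp_add, Real.exp_le_exp]
    have := cosh_sub_one_lb v
    nlinarith
  have : K0 y ≤ ∫ v in Ioi (0:ℝ), Real.exp (-y) * Real.exp (-(y/2) * v^2) := by
    apply setIntegral_mono_on _ hint.integrableOn measurableSet_Ioi (fun v _ => hpt v)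
    · apply hint.integrableOn.mono' ((by fun_prop : Continuous fun v : ℝ => Real.exp (-y * Real.cosh v)).aestronglyMeasurable)
      filter_upwards [] with v
      rw [Real.norm_eq_abs, abs_of_nonneg (Real.exp_pos _).le]
      exact hpt v
  calc K0 y ≤ _ := this
  _ = Real.exp (-y) * ∫ v in Ioi (0:ℝ), Real.exp (-(y/2) * v^2) := integral_const_mul _ _
  _ = Real.sqrt (π/(y/2))/2 * Real.exp (-y) := by rw [integral_gaussian_Ioi]; ring

lemma I0_le {x : ℝ} (hx : 0 < x) :
    I0 x ≤ (1/π) * (Real.sqrt (π/(2*x/π^2))/2) * Real.exp x := by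
  have hb : (0:ℝ) < 2*x/π^2 := by positivity
  have hint : Integrable (fun θ : ℝ => Real.exp x * Real.exp (-(2*x/π^2) * θ^2)) :=
    (integrable_exp_neg_mul_sq hb).const_mul _
  have hpt : ∀ θ ∈ Ioc (0:ℝ) π,
      Real.exp (x * Real.cos θ) ≤ Real.exp x * Real.exp (-(2*x/π^2) * θ^2) := by
    intro θ hθ
    rw [← Real.exp_add, Real.exp_le_exp]
    have h := one_sub_cos_lb θ hθ.1.le hθ.2
    have h2 := mul_le_mul_of_nonneg_left h hx.le
    have h3 : x + -(2*x/π^2)*θ^2 = x*(1 - Real.cos θ) - x*(2/π^2*θ^2) + x*Real.cos θ := by ring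
    linarith [h2]
  have key : (∫ θ in (0:ℝ)..π, Real.exp (x * Real.cos θ))
      ≤ Real.exp x * (Real.sqrt (π/(2*x/π^2))/2) := by
    rw [intervalIntegral.integral_of_le Real.pi_pos.le]
    calc (∫ θ in Ioc (0:ℝ) π, Real.exp (x * Real.cos θ))
        ≤ ∫ θ in Ioc (0:ℝ) π, Real.exp x * Real.exp (-(2*x/π^2) * θ^2) := by
          apply setIntegral_mono_on _ hint.integrableOn measurableSet_Ioc hpt
          exact (by fun_prop : Continuous fun θ : ℝ => Real.exp (x * Real.cos θ)).integrableOn_Ioc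
    _ ≤ ∫ θ in Ioi (0:ℝ), Real.exp x * Real.exp (-(2*x/π^2) * θ^2) := by
          apply setIntegral_mono_set hint.integrableOn
          · filter_upwards [] with θ; positivity
          · exact (Ioc_subset_Ioi_self).eventuallyLE
    _ = Real.exp x * (Real.sqrt (π/(2*x/π^2))/2) := by
          rw [integral_const_mul, integral_gaussian_Ioi]
  unfold I0
  have hπ : (0:ℝ) < 1/π := by positivity
  calc (1/π) * ∫ θ in (0:ℝ)..π, Real.exp (x * Real.cos θ)
      ≤ (1/π) * (Real.exp x * (Real.sqrt (π/(2*x/π^2))/2)) := by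
        exact mul_le_mul_of_nonneg_left key hπ.le
  _ = (1/π) * (Real.sqrt (π/(2*x/π^2))/2) * Real.exp x := by ring

lemma K0_rep {y : ℝ} (hy : 0 < y) :
    Real.sqrt y * (Real.exp y * K0 y)
      = ∫ w in Ioi (0:ℝ), Real.exp (-(y * (Real.cosh (w/Real.sqrt y) - 1))) := by
  have hsy : 0 < Real.sqrt y := Real.sqrt_pos.2 hy
  have h1 : Real.exp y * K0 y = ∫ v in Ioi (0:ℝ), Real.exp (-(y * (Real.cosh v - 1))) := by
    unfold K0
    rw [← integral_const_mul]
    apply setIntegral_congr_fun measurableSet_Ioi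
    intro v _
    simp only [← Real.exp_add]
    congr 1
    ring
  rw [h1]
  have h2 := integral_comp_mul_left_Ioi
    (fun v => Real.exp (-(y * (Real.cosh v - 1)))) 0 (inv_pos.2 hsy)
  simp only [mul_zero, smul_eq_mul, inv_inv] at h2
  rw [← h2]
  apply setIntegral_congr_fun measurableSet_Ioi
  intro w _
  simp only [div_eq_inv_mul]

lemma I0_rep {x : ℝ} (hx : 0 < x) :
    Real.sqrt x * (Real.exp (-x) * (π * I0 x))
      = ∫ w in Ioi (0:ℝ),
          (Ioc (0:ℝ) (π * Real.sqrt x)).indicator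
            (fun w => Real.exp (-(x * (1 - Real.cos (w/Real.sqrt x))))) w := by
  have hsx : 0 < Real.sqrt x := Real.sqrt_pos.2 hx
  have h0 : π * I0 x = ∫ θ in (0:ℝ)..π, Real.exp (x * Real.cos θ) := by
    unfold I0
    field_simp
  have h1 : Real.exp (-x) * (π * I0 x)
      = ∫ θ in (0:ℝ)..π, Real.exp (-(x * (1 - Real.cos θ))) := by
    rw [h0, ← intervalIntegral.integral_const_mul]
    apply intervalIntegral.integral_congr
    intro θ _
    simp only [← Real.exp_add]
    congr 1
    ring
  have h2 : (∫ w in (0:ℝ)..(π * Real.sqrt x),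
        Real.exp (-(x * (1 - Real.cos (w/Real.sqrt x)))))
      = Real.sqrt x * ∫ θ in (0:ℝ)..π, Real.exp (-(x * (1 - Real.cos θ))) := by
    have h := intervalIntegral.integral_comp_div
      (a := (0:ℝ)) (b := π * Real.sqrt x) (c := Real.sqrt x)
      (f := fun θ => Real.exp (-(x * (1 - Real.cos θ)))) (ne_of_gt hsx)
    rw [h, zero_div, mul_div_assoc, div_self (ne_of_gt hsx), mul_one, smul_eq_mul]
  rw [h1, ← h2, intervalIntegral.integral_of_le (by positivity),
    integral_indicator measurableSet_Ioc, Measure.restrict_restrict measurableSet_Ioc,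
    Set.inter_eq_left.2 Ioc_subset_Ioi_self]

lemma tendsto_K0_scaled :
    Tendsto (fun y : ℝ => Real.sqrt y * (Real.exp y * K0 y)) atTop
      (nhds (Real.sqrt (π/(1/2))/2)) := by
  have key : Tendsto
      (fun y : ℝ => ∫ w in Ioi (0:ℝ), Real.exp (-(y * (Real.cosh (w/Real.sqrt y) - 1))))
      atTop (nhds (Real.sqrt (π/(1/2))/2)) := by
    rw [← integral_gaussian_Ioi (1/2)]
    apply tendsto_integral_filter_of_dominated_convergence
      (fun w => Real.exp (-(1/2) * w^2))
    · filter_upwards [] with y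
      exact ((by fun_prop : Continuous fun w : ℝ =>
        Real.exp (-(y * (Real.cosh (w/Real.sqrt y) - 1)))).aestronglyMeasurable)
    · filter_upwards [eventually_gt_atTop (0:ℝ)] with y hy
      filter_upwards [ae_restrict_mem measurableSet_Ioi] with w _
      rw [Real.norm_eq_abs, abs_of_nonneg (Real.exp_pos _).le, Real.exp_le_exp]
      have hsq : Real.sqrt y ^ 2 = y := Real.sq_sqrt hy.le
      have h := cosh_sub_one_lb (w/Real.sqrt y)
      have hd : (w/Real.sqrt y)^2 = w^2/y := by
        rw [div_pow, hsq]
      rw [hd] at h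
      have h5 := mul_le_mul_of_nonneg_left h hy.le
      have h4 : y*(w^2/y/2) = w^2/2 := by field_simp
      rw [h4] at h5
      linarith
    · exact (integrable_exp_neg_mul_sq (by norm_num : (0:ℝ) < 1/2)).integrableOn
    · filter_upwards [ae_restrict_mem measurableSet_Ioi] with w hw
      have h := lim_cosh (w := w) hw
      have : Tendsto (fun y : ℝ => -(y * (Real.cosh (w/Real.sqrt y) - 1))) atTop
          (nhds (-(1/2) * w^2)) := by
        rw [show -(1/2) * w^2 = -(w^2/2) by ring]
        exact h.neg
      exact (Real.continuous_exp.tendsto _).comp this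
  apply key.congr'
  filter_upwards [eventually_gt_atTop (0:ℝ)] with y hy
  exact (K0_rep hy).symm

lemma tendsto_I0_scaled :
    Tendsto (fun x : ℝ => Real.sqrt x * (Real.exp (-x) * (π * I0 x))) atTop
      (nhds (Real.sqrt (π/(1/2))/2)) := by
  have key : Tendsto
      (fun x : ℝ => ∫ w in Ioi (0:ℝ),
          (Ioc (0:ℝ) (π * Real.sqrt x)).indicator
            (fun w => Real.exp (-(x * (1 - Real.cos (w/Real.sqrt x))))) w)
      atTop (nhds (Real.sqrt (π/(1/2))/2)) := by
    rw [← integral_gaussian_Ioi (1/2)]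
    apply tendsto_integral_filter_of_dominated_convergence
      (fun w => Real.exp (-(2/π^2) * w^2))
    · filter_upwards [] with x
      exact (((by fun_prop : Continuous fun w : ℝ =>
        Real.exp (-(x * (1 - Real.cos (w/Real.sqrt x))))).measurable.indicator
        measurableSet_Ioc).aestronglyMeasurable)
    · filter_upwards [eventually_gt_atTop (0:ℝ)] with x hx
      filter_upwards [ae_restrict_mem measurableSet_Ioi] with w hw0
      rw [Real.norm_eq_abs]
      by_cases hmem : w ∈ Ioc (0:ℝ) (π * Real.sqrt x)
      · rw [Set.indicator_of_mem hmem, abs_of_nonneg (Real.exp_pos _).le, Real.exp_le_exp]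
        have hsx : 0 < Real.sqrt x := Real.sqrt_pos.2 hx
        have hθ1 : 0 ≤ w/Real.sqrt x := div_nonneg (le_of_lt (Set.mem_Ioi.1 hw0)) hsx.le
        have hθ2 : w/Real.sqrt x ≤ π := by
          rw [div_le_iff₀ hsx]
          exact hmem.2
        have h := one_sub_cos_lb _ hθ1 hθ2
        have hsq : Real.sqrt x ^ 2 = x := Real.sq_sqrt hx.le
        have hd : (w/Real.sqrt x)^2 = w^2/x := by rw [div_pow, hsq]
        rw [hd] at h
        have h2 := mul_le_mul_of_nonneg_left h hx.le
        have h3 : x * (2/π^2 * (w^2/x)) = 2/π^2 * w^2 := by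
          field_simp
        rw [h3] at h2
        nlinarith
      · rw [Set.indicator_of_notMem hmem, abs_zero]
        positivity
    · exact (integrable_exp_neg_mul_sq (by positivity : (0:ℝ) < 2/π^2)).integrableOn
    · filter_upwards [ae_restrict_mem measurableSet_Ioi] with w hw
      have h := lim_cos (w := w) hw
      have hexp : Tendsto (fun x : ℝ => Real.exp (-(x * (1 - Real.cos (w/Real.sqrt x))))) atTop
          (nhds (Real.exp (-(1/2) * w^2))) := by
        have : Tendsto (fun x : ℝ => -(x * (1 - Real.cos (w/Real.sqrt x)))) atTop
            (nhds (-(1/2) * w^2)) := by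
          rw [show -(1/2) * w^2 = -(w^2/2) by ring]
          exact h.neg
        exact (Real.continuous_exp.tendsto _).comp this
      apply hexp.congr'
      filter_upwards [eventually_gt_atTop ((w/π)^2)] with x hxw
      have hx : 0 < x := lt_of_le_of_lt (by positivity) hxw
      have hsx : 0 < Real.sqrt x := Real.sqrt_pos.2 hx
      have hw' : 0 < w := Set.mem_Ioi.1 hw
      have hwle : w ≤ π * Real.sqrt x := by
        have h1 : Real.sqrt ((w/π)^2) ≤ Real.sqrt x := Real.sqrt_le_sqrt hxw.le
        rw [Real.sqrt_sq (div_nonneg hw'.le Real.pi_pos.le)] at h1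
        exact (div_le_iff₀' Real.pi_pos).1 h1
      exact (Set.indicator_of_mem (Set.mem_Ioc.2 ⟨hw', hwle⟩)
        (fun w => Real.exp (-(x * (1 - Real.cos (w/Real.sqrt x)))))).symm
  apply key.congr'
  filter_upwards [eventually_gt_atTop (0:ℝ)] with x hx
  exact (I0_rep hx).symm

lemma H_tendsto (m : ℕ) {s : ℝ} (hs : 0 < s) :
    Tendsto (fun u : ℝ =>
        I0 (Real.sqrt u * (s/(1-u))) * K0 (s/(1-u)) * s^(m+1) / (1-u))
      (nhdsWithin 1 (Set.Iio 1)) (nhds (s^m * Real.exp (-(s/2)) / 2)) := by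
  set l := nhdsWithin (1:ℝ) (Set.Iio 1) with hl
  -- eventual membership
  have hmem : ∀ᶠ u in l, u ∈ Set.Ioo (1/2:ℝ) 1 := by
    have h1 : ∀ᶠ u in l, (1/2:ℝ) < u :=
      eventually_nhdsWithin_of_eventually_nhds (eventually_gt_nhds (by norm_num))
    have h2 : ∀ᶠ u in l, u < 1 := by
      filter_upwards [self_mem_nhdsWithin] with u hu
      exact hu
    filter_upwards [h1, h2] with u hu1 hu2
    exact ⟨hu1, hu2⟩
  -- y → ∞
  have h1u : Tendsto (fun u : ℝ => 1 - u) l (nhdsWithin 0 (Set.Ioi 0)) := by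
    rw [tendsto_nhdsWithin_iff]
    constructor
    · have h : Tendsto (fun u : ℝ => 1 - u) (nhds 1) (nhds 0) := by
        have h2 := (tendsto_const_nhds (x := (1:ℝ)) (f := nhds (1:ℝ))).sub tendsto_id
        simpa using h2
      exact h.mono_left nhdsWithin_le_nhds
    · filter_upwards [self_mem_nhdsWithin] with u hu
      simpa using hu
  have hy : Tendsto (fun u : ℝ => s/(1-u)) l atTop := by
    have hinv : Tendsto (fun u : ℝ => ((1:ℝ)-u)⁻¹) l atTop :=
      tendsto_inv_nhdsGT_zero.comp h1u
    have := hinv.const_mul_atTop hs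
    simpa [div_eq_mul_inv] using this
  -- x → ∞
  have hx : Tendsto (fun u : ℝ => Real.sqrt u * (s/(1-u))) l atTop := by
    apply tendsto_atTop_mono' l _ (hy.const_mul_atTop (by norm_num : (0:ℝ) < 1/2))
    filter_upwards [hmem] with u hu
    have hu1 : (0:ℝ) < 1 - u := by linarith [hu.2]
    have hsu : (1/2:ℝ) ≤ Real.sqrt u := by
      rw [show (1/2:ℝ) = Real.sqrt (1/4) by
        rw [show (1/4:ℝ) = (1/2)^2 by norm_num, Real.sqrt_sq]; norm_num]
      exact Real.sqrt_le_sqrt (by linarith [hu.1])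
    exact mul_le_mul_of_nonneg_right hsu (by positivity)
  -- components
  have hA := tendsto_I0_scaled.comp hx
  have hB := tendsto_K0_scaled.comp hy
  have hsqrtu : Tendsto (fun u : ℝ => Real.sqrt u) l (nhds 1) := by
    have := (Real.continuous_sqrt.tendsto (1:ℝ)).mono_left (nhdsWithin_le_nhds (s := Set.Iio 1))
    simpa using this
  have hexp : Tendsto (fun u : ℝ => Real.exp (-(s/(1+Real.sqrt u)))) l
      (nhds (Real.exp (-(s/2)))) := by
    have hden : Tendsto (fun u : ℝ => 1 + Real.sqrt u) l (nhds 2) := by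
      have := tendsto_const_nhds (x := (1:ℝ)) (f := l) |>.add hsqrtu
      norm_num at this
      exact this
    have hfrac : Tendsto (fun u : ℝ => -(s/(1+Real.sqrt u))) l (nhds (-(s/2))) :=
      ((tendsto_const_nhds.div hden two_ne_zero)).neg
    exact (Real.continuous_exp.tendsto _).comp hfrac
  have h4 : Tendsto (fun u : ℝ => s^m / Real.sqrt (Real.sqrt u)) l (nhds (s^m/1)) := by
    apply tendsto_const_nhds.div _ one_ne_zero
    have := hsqrtu.sqrt
    simpa using this
  have hR : Tendsto (fun u : ℝ =>
      Real.exp (-(s/(1+Real.sqrt u))) * (s^m / Real.sqrt (Real.sqrt u))) l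
      (nhds (Real.exp (-(s/2)) * (s^m/1))) := hexp.mul h4
  have hprod := (((tendsto_const_nhds (x := (1/π : ℝ)) (f := l)).mul hA).mul hB).mul hR
  have hval : 1/π * (Real.sqrt (π/(1/2))/2) * (Real.sqrt (π/(1/2))/2)
      * (Real.exp (-(s/2)) * (s^m/1)) = s^m * Real.exp (-(s/2)) / 2 := by
    have hπ : (0:ℝ) < π := Real.pi_pos
    have hGG : Real.sqrt (π/(1/2)) * Real.sqrt (π/(1/2)) = π/(1/2) :=
      Real.mul_self_sqrt (by positivity)
    rw [div_one, show 1/π * (Real.sqrt (π/(1/2))/2) * (Real.sqrt (π/(1/2))/2)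
      * (Real.exp (-(s/2)) * s^m)
      = (Real.sqrt (π/(1/2)) * Real.sqrt (π/(1/2))) * (Real.exp (-(s/2)) * s^m) / (4*π) by ring,
      hGG]
    field_simp
    ring
  rw [hval] at hprod
  apply hprod.congr'
  filter_upwards [hmem] with u hu
  -- the algebraic identity
  have hu0 : (0:ℝ) < u := lt_trans (by norm_num) hu.1
  have hc : (0:ℝ) < 1 - u := by linarith [hu.2]
  have ha0 : (0:ℝ) < Real.sqrt u := Real.sqrt_pos.2 hu0
  have ha1 : Real.sqrt u < 1 := by
    rw [show (1:ℝ) = Real.sqrt 1 by simp]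
    exact Real.sqrt_lt_sqrt hu0.le hu.2
  have hy0 : (0:ℝ) < s/(1-u) := by positivity
  set a := Real.sqrt u with hadef
  set c := (1-u) with hcdef
  set Y := s/c with hYdef
  have hasq : a * a = u := Real.mul_self_sqrt hu0.le
  have hxy : a * Y - Y = -(s/(1+a)) := by
    rw [hYdef, hcdef]
    have h1a : (1:ℝ) + a ≠ 0 := by positivity
    have hc1 : (1:ℝ) - u ≠ 0 := ne_of_gt (by linarith [hu.2])
    field_simp
    nlinarith [hasq]
  have hexpsplit : Real.exp (-(s/(1+a))) = Real.exp (a*Y) * Real.exp (-Y) := by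
    rw [← Real.exp_add]
    congr 1
    linarith [hxy]
  show 1/π * (Real.sqrt (a*Y) * (Real.exp (-(a*Y)) * (π * I0 (a*Y))))
      * (Real.sqrt Y * (Real.exp Y * K0 Y))
      * (Real.exp (-(s/(1+a))) * (s^m / Real.sqrt a))
      = I0 (a*Y) * K0 Y * s^(m+1) / c
  rw [hexpsplit]
  have e1 : Real.sqrt (a*Y) = Real.sqrt a * Real.sqrt Y := Real.sqrt_mul ha0.le Y
  have e2 : Real.sqrt Y * Real.sqrt Y = Y := Real.mul_self_sqrt hy0.le
  have hex : Real.exp (-(a*Y)) * Real.exp (a*Y) = 1 := by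
    rw [← Real.exp_add]; simp
  have hey : Real.exp Y * Real.exp (-Y) = 1 := by
    rw [← Real.exp_add]; simp
  have hsa : Real.sqrt a ≠ 0 := ne_of_gt (Real.sqrt_pos.2 ha0)
  have hπ : (π:ℝ) ≠ 0 := Real.pi_ne_zero
  have lhs_eq : 1/π * (Real.sqrt (a*Y) * (Real.exp (-(a*Y)) * (π * I0 (a*Y))))
      * (Real.sqrt Y * (Real.exp Y * K0 Y))
      * ((Real.exp (a*Y) * Real.exp (-Y)) * (s^m / Real.sqrt a))
      = I0 (a*Y) * K0 Y * s^m
        * ((Real.sqrt (a*Y) * Real.sqrt Y / Real.sqrt a)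
          * ((Real.exp (-(a*Y)) * Real.exp (a*Y)) * (Real.exp Y * Real.exp (-Y)))
          * (π * (1/π))) := by ring
  rw [lhs_eq, hex, hey, e1]
  have e5 : Real.sqrt a * Real.sqrt Y * Real.sqrt Y / Real.sqrt a = Y := by
    rw [mul_assoc, e2]
    exact mul_div_cancel_left₀ Y hsa
  rw [e5, mul_one_div_cancel hπ]
  rw [hYdef, pow_succ]
  field_simp

lemma H_bound (m : ℕ) {u s : ℝ} (hu : u ∈ Set.Ioo (1/2:ℝ) 1) (hs : 0 < s) :
    I0 (Real.sqrt u * (s/(1-u))) * K0 (s/(1-u)) * s^(m+1) / (1-u)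
      ≤ π/2 * (s^m * Real.exp (-(s/2))) := by
  have hu0 : (0:ℝ) < u := lt_trans (by norm_num) hu.1
  have hc : (0:ℝ) < 1 - u := by linarith [hu.2]
  have ha0 : (0:ℝ) < Real.sqrt u := Real.sqrt_pos.2 hu0
  have ha1 : Real.sqrt u ≤ 1 := by
    rw [show (1:ℝ) = Real.sqrt 1 by simp]
    exact Real.sqrt_le_sqrt hu.2.le
  set a := Real.sqrt u with hadef
  set Y := s/(1-u) with hYdef
  have hY : (0:ℝ) < Y := by positivity
  have hX : (0:ℝ) < a * Y := by positivity
  have hasq : a * a = u := Real.mul_self_sqrt hu0.le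
  have hsa : (1/2:ℝ) ≤ Real.sqrt a := by
    rw [show (1/2:ℝ) = Real.sqrt (1/4) by
      rw [show (1/4:ℝ) = (1/2)^2 by norm_num, Real.sqrt_sq]; norm_num]
    apply Real.sqrt_le_sqrt
    rw [show (1/4:ℝ) = Real.sqrt (1/16) by
      rw [show (1/16:ℝ) = (1/4)^2 by norm_num, Real.sqrt_sq]; norm_num]
    exact Real.sqrt_le_sqrt (by linarith [hu.1])
  have hsa0 : (0:ℝ) < Real.sqrt a := lt_of_lt_of_le (by norm_num) hsa
  -- exponent bound
  have hXY : a * Y - Y = -(s/(1+a)) := by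
    rw [hYdef]
    have h1a : (1:ℝ) + a ≠ 0 := by positivity
    field_simp
    nlinarith [hasq]
  have hexp_le : Real.exp (a*Y + -Y) ≤ Real.exp (-(s/2)) := by
    rw [Real.exp_le_exp, show a*Y + -Y = a*Y - Y by ring, hXY]
    have : s/2 ≤ s/(1+a) := by
      apply div_le_div_of_nonneg_left hs.le (by positivity) (by linarith)
    linarith
  -- sqrt product
  have hsqrtprod : Real.sqrt (π/(2*(a*Y)/π^2)) * Real.sqrt (π/(Y/2))
      = π^2/(Real.sqrt a * Y) := by
    rw [← Real.sqrt_mul (by positivity)]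
    rw [show π/(2*(a*Y)/π^2) * (π/(Y/2)) = π^4/(a*Y^2) by field_simp]
    rw [Real.sqrt_div (by positivity), show (π:ℝ)^4 = (π^2)^2 by ring,
      Real.sqrt_sq (by positivity), Real.sqrt_mul ha0.le, Real.sqrt_sq hY.le]
  -- main product bound
  have key : I0 (a*Y) * K0 Y ≤ π/(2*Y) * Real.exp (-(s/2)) := by
    have h1 := I0_le hX
    have h2 := K0_le hY
    have hmul : I0 (a*Y) * K0 Y
        ≤ ((1/π) * (Real.sqrt (π/(2*(a*Y)/π^2))/2) * Real.exp (a*Y))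
          * (Real.sqrt (π/(Y/2))/2 * Real.exp (-Y)) :=
      mul_le_mul h1 h2 (K0_nonneg _) (by positivity)
    have hrw : ((1/π) * (Real.sqrt (π/(2*(a*Y)/π^2))/2) * Real.exp (a*Y))
          * (Real.sqrt (π/(Y/2))/2 * Real.exp (-Y))
        = (Real.sqrt (π/(2*(a*Y)/π^2)) * Real.sqrt (π/(Y/2)))
          * (Real.exp (a*Y) * Real.exp (-Y)) / (4*π) := by ring
    rw [hrw, hsqrtprod, ← Real.exp_add] at hmul
    calc I0 (a*Y) * K0 Y ≤ π^2/(Real.sqrt a * Y) * Real.exp (a*Y + -Y) / (4*π) := hmul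
    _ ≤ π^2/((1/2) * Y) * Real.exp (-(s/2)) / (4*π) := by
        apply div_le_div_of_nonneg_right _ (by positivity)
        apply mul_le_mul _ hexp_le (Real.exp_pos _).le (by positivity)
        apply div_le_div_of_nonneg_left (by positivity) (by positivity)
        exact mul_le_mul_of_nonneg_right hsa hY.le
    _ = π/(2*Y) * Real.exp (-(s/2)) := by
        field_simp
        ring
  calc I0 (a*Y) * K0 Y * s^(m+1) / (1-u)
      = (I0 (a*Y) * K0 Y) * (s^(m+1)/(1-u)) := by ring
  _ ≤ (π/(2*Y) * Real.exp (-(s/2))) * (s^(m+1)/(1-u)) :=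
      mul_le_mul_of_nonneg_right key (by positivity)
  _ = π/2 * (s^m * Real.exp (-(s/2))) := by
      rw [hYdef, pow_succ]
      field_simp

lemma bound_integrable (m : ℕ) :
    IntegrableOn (fun s : ℝ => π/2 * (s^m * Real.exp (-(s/2)))) (Ioi 0) := by
  have g1 : IntegrableOn (fun x : ℝ => Real.exp (-x) * x^((m+1:ℝ)-1)) (Ioi 0) :=
    Real.GammaIntegral_convergent (by positivity)
  have g2 : IntegrableOn (fun x : ℝ => Real.exp (-(1/2*x)) * (1/2*x)^((m+1:ℝ)-1)) (Ioi 0) := by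
    have h := (integrableOn_Ioi_comp_mul_left_iff
      (fun x : ℝ => Real.exp (-x) * x^((m+1:ℝ)-1)) 0 (by norm_num : (0:ℝ) < 1/2)).2
    rw [mul_zero] at h
    exact h g1
  have g3 : IntegrableOn (fun x : ℝ => (π/2) * 2^m * (Real.exp (-(1/2*x)) * (1/2*x)^((m+1:ℝ)-1)))
      (Ioi 0) := g2.const_mul ((π/2) * 2^m)
  apply MeasureTheory.IntegrableOn.congr_fun g3 _ measurableSet_Ioi
  intro s hs
  have hs0 : (0:ℝ) < s := hs
  dsimp only
  have hrp : (1/2*s)^((m+1:ℝ)-1) = (1/2*s)^(m:ℕ) := by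
    rw [show (m+1:ℝ)-1 = (m:ℝ) by ring, Real.rpow_natCast]
  rw [hrp]
  have h2m : (2:ℝ)^m ≠ 0 := by positivity
  field_simp
  rw [← mul_pow]; congr 1; ring

theorem weber_schafheitlin_asymptotics (n : ℕ) (hn : 0 < n) :
    Filter.Tendsto
      (fun u : ℝ => (1 - u)^n * ∫ t in Set.Ioi (0:ℝ), I0 (Real.sqrt u * t) * K0 t * t^n)
      (nhdsWithin 1 (Set.Iio 1))
      (nhds ((2:ℝ)^(n-1) * Nat.factorial (n-1))) := by
  obtain ⟨m, rfl⟩ : ∃ m, n = m + 1 := ⟨n - 1, (Nat.succ_pred_eq_of_pos hn).symm⟩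
  simp only [Nat.add_sub_cancel]
  set l := nhdsWithin (1:ℝ) (Set.Iio 1) with hl
  have hmem : ∀ᶠ u in l, u ∈ Set.Ioo (1/2:ℝ) 1 := by
    have h1 : ∀ᶠ u in l, (1/2:ℝ) < u :=
      eventually_nhdsWithin_of_eventually_nhds (eventually_gt_nhds (by norm_num))
    have h2 : ∀ᶠ u in l, u < 1 := by
      filter_upwards [self_mem_nhdsWithin] with u hu; exact hu
    filter_upwards [h1, h2] with u hu1 hu2; exact ⟨hu1, hu2⟩
  -- value of the limit integral
  have hval : (∫ s in Ioi (0:ℝ), s^m * Real.exp (-(s/2)) / 2) = 2^m * Nat.factorial m := by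
    have h := Real.integral_rpow_mul_exp_neg_mul_Ioi
      (a := (m+1:ℝ)) (r := (1/2:ℝ)) (by positivity) (by norm_num)
    have hcongr : (∫ s in Ioi (0:ℝ), s^m * Real.exp (-(s/2)) / 2)
        = (∫ t in Ioi (0:ℝ), t^((m+1:ℝ)-1) * Real.exp (-(1/2 * t))) / 2 := by
      rw [← integral_div]
      apply setIntegral_congr_fun measurableSet_Ioi
      intro s hs
      have hs0 : (0:ℝ) < s := hs
      dsimp only
      rw [show (m+1:ℝ)-1 = (m:ℝ) by ring, Real.rpow_natCast,
        show -(1/2 * s) = -(s/2) by ring]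
    rw [hcongr, h]
    rw [show ((m:ℝ)+1) = ((m+1:ℕ):ℝ) by push_cast; ring, Real.rpow_natCast,
      show (1/(1/2):ℝ) = 2 by norm_num]
    rw [show ((m+1:ℕ):ℝ) = (m:ℝ)+1 by push_cast; ring, Real.Gamma_nat_eq_factorial]
    rw [pow_succ]
    field_simp
  -- dominated convergence
  have hDCT : Tendsto
      (fun u : ℝ => ∫ s in Ioi (0:ℝ),
        I0 (Real.sqrt u * (s/(1-u))) * K0 (s/(1-u)) * s^(m+1) / (1-u)) l
      (nhds (∫ s in Ioi (0:ℝ), s^m * Real.exp (-(s/2)) / 2)) := by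
    apply tendsto_integral_filter_of_dominated_convergence
      (fun s => π/2 * (s^m * Real.exp (-(s/2))))
    · filter_upwards [] with u
      have m1 : Measurable fun s : ℝ => Real.sqrt u * (s/(1-u)) := by fun_prop
      have m2 : Measurable fun s : ℝ => s/(1-u) := by fun_prop
      exact ((((I0_measurable.comp m1).mul (K0_measurable.comp m2)).mul
        (measurable_id.pow_const (m+1))).div_const (1-u)).aestronglyMeasurable
    · filter_upwards [hmem] with u hu
      filter_upwards [ae_restrict_mem measurableSet_Ioi] with s hs
      rw [Real.norm_eq_abs, abs_of_nonneg]
      · exact H_bound m hu hs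
      · exact div_nonneg (mul_nonneg (mul_nonneg (I0_nonneg _) (K0_nonneg _))
          (pow_nonneg (le_of_lt hs) _)) (by linarith [hu.2])
    · exact bound_integrable m
    · filter_upwards [ae_restrict_mem measurableSet_Ioi] with s hs
      exact H_tendsto m hs
  rw [hval] at hDCT
  apply hDCT.congr'
  filter_upwards [hmem] with u hu
  have hc : (0:ℝ) < 1 - u := by linarith [hu.2]
  have hsub := integral_comp_mul_left_Ioi
    (fun t => I0 (Real.sqrt u * t) * K0 t * t^(m+1)) 0 (inv_pos.2 hc)
  simp only [mul_zero, smul_eq_mul, inv_inv] at hsub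
  calc (∫ s in Ioi (0:ℝ),
        I0 (Real.sqrt u * (s/(1-u))) * K0 (s/(1-u)) * s^(m+1) / (1-u))
      = ∫ s in Ioi (0:ℝ), (1-u)^m *
          (I0 (Real.sqrt u * ((1-u)⁻¹ * s)) * K0 ((1-u)⁻¹ * s) * ((1-u)⁻¹ * s)^(m+1)) := by
        apply setIntegral_congr_fun measurableSet_Ioi
        intro s hs
        have hs0 : (0:ℝ) < s := hs
        dsimp only
        rw [show (1-u)⁻¹ * s = s/(1-u) by rw [div_eq_inv_mul]]
        rw [div_pow, pow_succ (1-u) m]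
        field_simp
  _ = (1-u)^m * ∫ s in Ioi (0:ℝ),
        I0 (Real.sqrt u * ((1-u)⁻¹ * s)) * K0 ((1-u)⁻¹ * s) * ((1-u)⁻¹ * s)^(m+1) :=
        integral_const_mul _ _
  _ = (1-u)^m * ((1-u) * ∫ t in Ioi (0:ℝ), I0 (Real.sqrt u * t) * K0 t * t^(m+1)) := by
        rw [hsub]
  _ = (1-u)^(m+1) * ∫ t in Ioi (0:ℝ), I0 (Real.sqrt u * t) * K0 t * t^(m+1) := by
        rw [pow_succ]
        ring
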